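/- Let V be a real inner product space, a : V → V → ℝ a symmetric positive semidefinite bilinear form, τ > 0, and define the K-norm ‖v‖_K² = ‖v‖² + (τ²/4)·a v v. Suppose μ, ξ₁, ξ₂ ∈ V satisfy, for all v in a subspace W ⊆ V containing μ: ⟪μ, v⟫ + (τ²/4) a μ v = ⟪2ξ₁ - ξ₂, v⟫ - (τ²/4) a (2ξ₁ + ξ₂) v. Then ‖μ‖_K ≤ 2‖ξ₁‖_K + ‖ξ₂‖_K. -/

import Mathlib

open RealInnerProductSpace

private lemma sqrt_cs (p q r s : ℝ) (hp : 0 ≤ p) (hq : 0 ≤ q) (hr : 0 ≤ r) (hs : 0 ≤ s) :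
    Real.sqrt p * Real.sqrt r + Real.sqrt q * Real.sqrt s
      ≤ Real.sqrt (p + q) * Real.sqrt (r + s) := by
  have h1 : (Real.sqrt p * Real.sqrt r + Real.sqrt q * Real.sqrt s)^2 ≤ (p+q)*(r+s) := by
    nlinarith [sq_nonneg (Real.sqrt p * Real.sqrt s - Real.sqrt q * Real.sqrt r),
      Real.sq_sqrt hp, Real.sq_sqrt hq, Real.sq_sqrt hr, Real.sq_sqrt hs,
      Real.sqrt_nonneg p, Real.sqrt_nonneg q, Real.sqrt_nonneg r, Real.sqrt_nonneg s]
  have h2 : 0 ≤ Real.sqrt p * Real.sqrt r + Real.sqrt q * Real.sqrt s := by positivity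
  calc Real.sqrt p * Real.sqrt r + Real.sqrt q * Real.sqrt s
      = Real.sqrt ((Real.sqrt p * Real.sqrt r + Real.sqrt q * Real.sqrt s)^2) :=
        (Real.sqrt_sq h2).symm
    _ ≤ Real.sqrt ((p+q)*(r+s)) := Real.sqrt_le_sqrt h1
    _ = Real.sqrt (p+q) * Real.sqrt (r+s) := Real.sqrt_mul (by linarith) _

theorem K_norm_stability
    {V : Type*} [NormedAddCommGroup V] [InnerProductSpace ℝ V]
    (a : V → V → ℝ)
    (ha_add : ∀ x y z : V, a (x + y) z = a x z + a y z)
    (ha_smul : ∀ (c : ℝ) (x y : V), a (c • x) y = c * a x y)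
    (ha_symm : ∀ x y : V, a x y = a y x)
    (ha_nonneg : ∀ x : V, 0 ≤ a x x)
    (τ : ℝ) (hτ : 0 < τ)
    (W : Submodule ℝ V)
    (μ ξ₁ ξ₂ : V) (hμW : μ ∈ W)
    (hEq : ∀ v ∈ W, ⟪μ, v⟫ + (τ^2/4) * a μ v
      = ⟪(2:ℝ) • ξ₁ - ξ₂, v⟫ - (τ^2/4) * a ((2:ℝ) • ξ₁ + ξ₂) v)
    (K : V → ℝ)
    (hK : ∀ v : V, K v = Real.sqrt (‖v‖^2 + (τ^2/4) * a v v)) :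
    K μ ≤ 2 * K ξ₁ + K ξ₂ := by
  set c : ℝ := τ^2/4 with hc_def
  have hc : 0 ≤ c := by positivity
  have hadd' : ∀ x y z : V, a x (y + z) = a x y + a x z := fun x y z => by
    rw [ha_symm, ha_add, ha_symm y x, ha_symm z x]
  have hsmul' : ∀ (t : ℝ) (x y : V), a x (t • y) = t * a x y := fun t x y => by
    rw [ha_symm, ha_smul, ha_symm]
  -- Cauchy–Schwarz for the semi-inner-product a
  have hacs : ∀ x y : V, (a x y)^2 ≤ a x x * a y y := by
    intro x y
    have key : ∀ t : ℝ, 0 ≤ a y y * (t * t) + (2 * a x y) * t + a x x := by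
      intro t
      have h := ha_nonneg (x + t • y)
      have expand : a (x + t • y) (x + t • y)
          = a x x + 2 * a x y * t + a y y * (t * t) := by
        simp only [ha_add, hadd', ha_smul, hsmul']
        rw [ha_symm y x]; ring
      rw [expand] at h; linarith
    have hd := discrim_le_zero key
    rw [discrim] at hd
    nlinarith
  -- key bound: |⟪x,μ⟫| + c|a x μ| ≤ K x * K μ
  have hbound : ∀ x : V, |(inner ℝ x μ : ℝ)| + c * |a x μ| ≤ K x * K μ := by
    intro x
    have hxx : (0:ℝ) ≤ c * a x x := mul_nonneg hc (ha_nonneg x)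
    have hμμ : (0:ℝ) ≤ c * a μ μ := mul_nonneg hc (ha_nonneg μ)
    have h1 : |(inner ℝ x μ : ℝ)| ≤ Real.sqrt (‖x‖^2) * Real.sqrt (‖μ‖^2) := by
      rw [Real.sqrt_sq (norm_nonneg x), Real.sqrt_sq (norm_nonneg μ)]
      exact abs_real_inner_le_norm x μ
    have h2 : c * |a x μ| ≤ Real.sqrt (c * a x x) * Real.sqrt (c * a μ μ) := by
      rw [← Real.sqrt_mul hxx]
      have hh := mul_le_mul_of_nonneg_left (hacs x μ) (sq_nonneg c)
      have hcs : (c * |a x μ|)^2 ≤ c * a x x * (c * a μ μ) := by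
        calc (c * |a x μ|)^2 = c^2 * (a x μ)^2 := by rw [mul_pow, sq_abs]
          _ ≤ c^2 * (a x x * a μ μ) := hh
          _ = c * a x x * (c * a μ μ) := by ring
      calc c * |a x μ| = Real.sqrt ((c * |a x μ|)^2) :=
            (Real.sqrt_sq (by positivity)).symm
        _ ≤ Real.sqrt (c * a x x * (c * a μ μ)) := Real.sqrt_le_sqrt hcs
    have h3 := sqrt_cs (‖x‖^2) (c * a x x) (‖μ‖^2) (c * a μ μ)
      (by positivity) hxx (by positivity) hμμ
    rw [hK x, hK μ]
    calc |(inner ℝ x μ : ℝ)| + c * |a x μ|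
        ≤ Real.sqrt (‖x‖^2) * Real.sqrt (‖μ‖^2)
          + Real.sqrt (c * a x x) * Real.sqrt (c * a μ μ) := by linarith
      _ ≤ Real.sqrt (‖x‖^2 + c * a x x) * Real.sqrt (‖μ‖^2 + c * a μ μ) := h3
  have hKnonneg : ∀ v : V, 0 ≤ K v := fun v => by rw [hK v]; exact Real.sqrt_nonneg _
  have hKsq : K μ ^ 2 = ‖μ‖^2 + c * a μ μ := by
    rw [hK μ]
    exact Real.sq_sqrt (add_nonneg (by positivity) (mul_nonneg hc (ha_nonneg μ)))
  have hmain : K μ ^ 2 ≤ 2 * (K ξ₁ * K μ) + K ξ₂ * K μ := by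
    have hb1 := hbound ξ₁
    have hb2 := hbound ξ₂
    have e1 : (inner ℝ ((2:ℝ) • ξ₁ - ξ₂) μ : ℝ)
        = 2 * (inner ℝ ξ₁ μ : ℝ) - (inner ℝ ξ₂ μ : ℝ) := by
      rw [inner_sub_left, real_inner_smul_left]
    have e2 : a ((2:ℝ) • ξ₁ + ξ₂) μ = 2 * a ξ₁ μ + a ξ₂ μ := by
      rw [ha_add, ha_smul]
    have e3 : (inner ℝ μ μ : ℝ) = ‖μ‖^2 := real_inner_self_eq_norm_sq μ
    have h := hEq μ hμW
    rw [e1, e2, e3] at h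
    have h' : ‖μ‖^2 + c * a μ μ
        = 2 * (inner ℝ ξ₁ μ : ℝ) - (inner ℝ ξ₂ μ : ℝ)
          - 2 * (c * a ξ₁ μ) - c * a ξ₂ μ := by linear_combination h
    have l1 : (inner ℝ ξ₁ μ : ℝ) ≤ |(inner ℝ ξ₁ μ : ℝ)| := le_abs_self _
    have l2 : -(inner ℝ ξ₂ μ : ℝ) ≤ |(inner ℝ ξ₂ μ : ℝ)| := neg_le_abs _
    have m1 : c * (-(a ξ₁ μ)) ≤ c * |a ξ₁ μ| :=
      mul_le_mul_of_nonneg_left (neg_le_abs _) hc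
    have m2 : c * (-(a ξ₂ μ)) ≤ c * |a ξ₂ μ| :=
      mul_le_mul_of_nonneg_left (neg_le_abs _) hc
    rw [hKsq, h']
    nlinarith [hb1, hb2, l1, l2, m1, m2]
  rcases eq_or_lt_of_le (hKnonneg μ) with h0 | h0
  · rw [← h0]
    have h1 := hKnonneg ξ₁; have h2 := hKnonneg ξ₂; linarith
  · nlinarith [hmain, h0]
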